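/- Let m_0 > ⋯ > m_n ≥ 0 be integers, V = span(t^{m_0}, …, t^{m_n}), I = [0,1] or I = ℝ₊, and P = {f ∈ V : f ≥ 0 on I}. If f spans an extreme ray of P, f(0) > 0, and deg(f) = m_0, then f has exactly n strictly positive roots counted with multiplicity, and all of them lie in I. -/

import Mathlib

open Polynomial


theorem card_posroots_toFinset (p : ℝ[X]) :
    (Multiset.filter (fun x => (0:ℝ) < x) p.roots).toFinset.card ≤
      ((Multiset.filter (fun x => (0:ℝ) < x) (derivative p).roots).toFinset \
        (Multiset.filter (fun x => (0:ℝ) < x) p.roots).toFinset).card + 1 := by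
  rcases eq_or_ne (derivative p) 0 with hp' | hp'
  · rw [eq_C_of_derivative_eq_zero hp', roots_C]
    simp
  have hp : p ≠ 0 := ne_of_apply_ne derivative (by rwa [derivative_zero])
  refine Finset.card_le_diff_of_interleaved fun x hx y hy hxy hxy' => ?_
  rw [Multiset.mem_toFinset, Multiset.mem_filter, mem_roots hp] at hx hy
  obtain ⟨z, hz1, hz2⟩ := exists_deriv_eq_zero hxy p.continuousOn (hx.1.trans hy.1.symm)
  refine ⟨z, ?_, hz1⟩
  rw [Multiset.mem_toFinset, Multiset.mem_filter, mem_roots hp']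
  exact ⟨by rwa [IsRoot, ← p.deriv], lt_trans hx.2 hz1.1⟩

theorem card_posroots_le_derivative (p : ℝ[X]) :
    Multiset.card (Multiset.filter (fun x => (0:ℝ) < x) p.roots) ≤
      Multiset.card (Multiset.filter (fun x => (0:ℝ) < x) (derivative p).roots) + 1 := by
  set R : Multiset ℝ := Multiset.filter (fun x => (0:ℝ) < x) p.roots with hR
  set R' : Multiset ℝ := Multiset.filter (fun x => (0:ℝ) < x) (derivative p).roots with hR'
  have hcount : ∀ x ∈ R.toFinset, R.count x = p.rootMultiplicity x := by
    intro x hx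
    have hpos : (0:ℝ) < x := (Multiset.mem_filter.1 (Multiset.mem_toFinset.1 hx)).2
    rw [hR, Multiset.count_filter, if_pos hpos, count_roots]
  have hcount' : ∀ x : ℝ, 0 < x → R'.count x = (derivative p).rootMultiplicity x := by
    intro x hx
    rw [hR', Multiset.count_filter, if_pos hx, count_roots]
  calc
    Multiset.card R = ∑ x ∈ R.toFinset, R.count x := (Multiset.toFinset_sum_count_eq _).symm
    _ = ∑ x ∈ R.toFinset, (R.count x - 1 + 1) :=
      (Finset.sum_congr rfl fun _ hx => (tsub_add_cancel_of_le <|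
        Nat.succ_le_iff.2 <| Multiset.count_pos.2 <| Multiset.mem_toFinset.1 hx).symm)
    _ = (∑ x ∈ R.toFinset, (p.rootMultiplicity x - 1)) + R.toFinset.card := by
      rw [Finset.sum_add_distrib, Finset.card_eq_sum_ones]
      congr 1
      exact Finset.sum_congr rfl fun x hx => by rw [hcount x hx]
    _ ≤ (∑ x ∈ R.toFinset, p.derivative.rootMultiplicity x) + ((R'.toFinset \ R.toFinset).card + 1) :=
      add_le_add
        (Finset.sum_le_sum fun _ _ => rootMultiplicity_sub_one_le_derivative_rootMultiplicity _ _)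
        (card_posroots_toFinset p)
    _ ≤ (∑ x ∈ R.toFinset, R'.count x) + ((∑ x ∈ R'.toFinset \ R.toFinset, R'.count x) + 1) := by
      refine add_le_add ?_ (add_le_add ((Finset.card_eq_sum_ones _).trans_le ?_) le_rfl)
      · refine le_of_eq (Finset.sum_congr rfl fun x hx => ?_)
        have hpos : (0:ℝ) < x := (Multiset.mem_filter.1 (Multiset.mem_toFinset.1 hx)).2
        rw [hcount' x hpos]
      · refine Finset.sum_le_sum fun x hx => Nat.succ_le_iff.2 ?_
        rw [Multiset.count_pos, ← Multiset.mem_toFinset]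
        exact (Finset.mem_sdiff.1 hx).1
    _ = Multiset.card R' + 1 := by
      rw [← add_assoc, ← Finset.sum_union Finset.disjoint_sdiff, Finset.union_sdiff_self_eq_union, ←
        Multiset.toFinset_sum_count_eq, ← Finset.sum_subset Finset.subset_union_right]
      intro x _ hx₂
      simpa only [Multiset.mem_toFinset, Multiset.count_eq_zero] using hx₂

theorem descartes_aux (d : ℕ) : ∀ p : ℝ[X], p ≠ 0 → p.natDegree ≤ d →
    Multiset.card (Multiset.filter (fun x => (0:ℝ) < x) p.roots) < p.support.card := by
  induction d with
  | zero =>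
    intro p hp hd
    obtain ⟨a, rfl⟩ := natDegree_eq_zero.1 (Nat.le_zero.1 hd)
    have ha : a ≠ 0 := fun h => hp (by rw [h, map_zero])
    rw [roots_C]
    simp [support_C ha]
  | succ d IH =>
    intro p hp hd
    rcases Nat.eq_zero_or_pos p.natDegree with h0 | h0
    · obtain ⟨a, rfl⟩ := natDegree_eq_zero.1 h0
      have ha : a ≠ 0 := fun h => hp (by rw [h, map_zero])
      rw [roots_C]
      simp [support_C ha]
    rcases Nat.eq_zero_or_pos p.natTrailingDegree with ht | ht
    · -- constant coefficient nonzero; use derivative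
      have hp' : derivative p ≠ 0 := by
        intro h
        have := eq_C_of_derivative_eq_zero h
        rw [this] at h0
        simp at h0
      have hd' : (derivative p).natDegree ≤ d := by
        have := natDegree_derivative_le p
        omega
      have key := IH (derivative p) hp' hd'
      -- support card of derivative ≤ support card of p - 1
      have h0mem : (0:ℕ) ∈ p.support := by
        rw [mem_support_iff]
        have : p.coeff 0 ≠ 0 := by
          have := trailingCoeff_nonzero_iff_nonzero.2 hp
          rwa [trailingCoeff, ht] at this
        exact this
      have hsup : (derivative p).support.card ≤ p.support.card - 1 := by
        have hinj : ∀ i ∈ (derivative p).support, i + 1 ∈ p.support.erase 0 := by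
          intro i hi
          rw [mem_support_iff, coeff_derivative] at hi
          have : p.coeff (i + 1) ≠ 0 := by
            intro h
            rw [h] at hi
            simp at hi
          exact Finset.mem_erase.2 ⟨Nat.succ_ne_zero i, mem_support_iff.2 this⟩
        have := Finset.card_le_card_of_injOn (fun i => i + 1) hinj
          (fun a _ b _ hab => by simpa using hab)
        rwa [Finset.card_erase_of_mem h0mem] at this
      have hcard : 1 ≤ p.support.card := Finset.card_pos.2 ⟨0, h0mem⟩
      have := card_posroots_le_derivative p
      omega
    · -- strip X^(natTrailingDegree)
      set m := p.natTrailingDegree with hm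
      have hdvd : (X : ℝ[X]) ^ m ∣ p := by
        rw [X_pow_dvd_iff]
        exact fun d hd => coeff_eq_zero_of_lt_natTrailingDegree hd
      obtain ⟨q, hq⟩ := hdvd
      have hq0 : q ≠ 0 := by
        intro h; rw [h, mul_zero] at hq; exact hp hq
      have hXm : (X : ℝ[X]) ^ m ≠ 0 := pow_ne_zero _ X_ne_zero
      -- roots equality
      have hroots : Multiset.filter (fun x => (0:ℝ) < x) p.roots
          = Multiset.filter (fun x => (0:ℝ) < x) q.roots := by
        rw [hq, roots_mul (hq ▸ hp), roots_pow, roots_X, Multiset.filter_add]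
        have : Multiset.filter (fun x => (0:ℝ) < x) (m • ({0} : Multiset ℝ)) = 0 := by
          rw [Multiset.filter_eq_nil]
          intro a ha
          have : a = 0 := by
            have := Multiset.mem_of_mem_nsmul ha
            simpa using this
          simp [this]
        rw [this, zero_add]
      -- support card
      have hsup : q.support.card ≤ p.support.card := by
        refine Finset.card_le_card_of_injOn (fun i => m + i) ?_ (fun a _ b _ hab => by simpa using hab)
        intro i hi
        rw [Finset.mem_coe, mem_support_iff] at hi ⊢
        have : p.coeff (m + i) ≠ 0 := by rw [hq, add_comm, coeff_X_pow_mul]; exact hi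
        simpa using this
      -- degree
      have hdq : q.natDegree ≤ d := by
        have : p.natDegree = m + q.natDegree := by
          rw [hq, natDegree_mul hXm hq0, natDegree_X_pow]
        omega
      have := IH q hq0 hdq
      rw [hroots]
      omega

theorem descartes (p : ℝ[X]) (hp : p ≠ 0) :
    Multiset.card (Multiset.filter (fun x => (0:ℝ) < x) p.roots) < p.support.card :=
  descartes_aux p.natDegree p hp le_rfl


lemma mem_span_support {n : ℕ} (m : Fin (n+1) → ℕ) (g : ℝ[X])
    (hg : g ∈ Submodule.span ℝ (Set.range fun i => (X : ℝ[X]) ^ m i)) :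
    g.support ⊆ Finset.image m Finset.univ := by
  induction hg using Submodule.span_induction with
  | mem x hx =>
    obtain ⟨i, rfl⟩ := hx
    intro k hk
    rw [mem_support_iff, coeff_X_pow] at hk
    have : k = m i := by by_contra h; simp [h] at hk
    subst this
    exact Finset.mem_image.2 ⟨i, Finset.mem_univ _, rfl⟩
  | zero => simp
  | add x y _ _ hx hy =>
    exact (support_add).trans (Finset.union_subset hx hy)
  | smul c x _ hx => exact (support_smul c x).trans hx

lemma linIndep_pows {n : ℕ} (m : Fin (n+1) → ℕ) (hminj : Function.Injective m) :
    LinearIndependent ℝ (fun i : Fin (n+1) => (X : ℝ[X]) ^ m i) := by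
  rw [linearIndependent_iff']
  intro s g hsum i hi
  have h := congrArg (fun p => Polynomial.coeff p (m i)) hsum
  simp only [finset_sum_coeff, coeff_smul, coeff_X_pow, Polynomial.coeff_zero,
    smul_eq_mul] at h
  rw [Finset.sum_eq_single i] at h
  · simpa using h
  · intro j _ hji
    rw [if_neg (fun h' => hji ((hminj h').symm)), mul_zero]
  · intro h'; exact absurd hi h'

lemma exists_g {n : ℕ} (m : Fin (n+1) → ℕ) (hminj : Function.Injective m)
    (q : ℝ[X]) (hq : q.Monic) (hrn : q.natDegree + 1 ≤ n) :
    ∃ g : ℝ[X], g ∈ Submodule.span ℝ (Set.range fun i => (X : ℝ[X]) ^ m i) ∧ g ≠ 0 ∧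
      q ∣ g ∧ g.coeff (m 0) = 0 := by
  classical
  set r := q.natDegree with hr
  set W := Submodule.span ℝ (Set.range fun i => (X : ℝ[X]) ^ m i) with hW
  haveI : FiniteDimensional ℝ W := FiniteDimensional.span_of_finite ℝ (Set.finite_range _)
  have hmod : ∀ p : ℝ[X], (modByMonicHom q) p ∈ degreeLT ℝ r := by
    intro p
    rw [mem_degreeLT]
    have h1 := degree_modByMonic_lt p hq
    have h2 : q.degree = (r : WithBot ℕ) := degree_eq_natDegree hq.ne_zero
    rw [h2] at h1
    exact h1
  let L : W →ₗ[ℝ] (degreeLT ℝ r × ℝ) :=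
    ((LinearMap.codRestrict (degreeLT ℝ r) (modByMonicHom q) hmod).comp W.subtype).prod
      ((lcoeff ℝ (m 0)).comp W.subtype)
  haveI : FiniteDimensional ℝ (degreeLT ℝ r) :=
    Module.Finite.equiv (degreeLTEquiv ℝ r).symm
  have hcod : Module.finrank ℝ (degreeLT ℝ r × ℝ) = r + 1 := by
    rw [Module.finrank_prod, (degreeLTEquiv ℝ r).finrank_eq]
    simp
  have hWrank : Module.finrank ℝ W = n + 1 := by
    rw [hW, finrank_span_eq_card (linIndep_pows m hminj)]
    simp
  have hker : 0 < Module.finrank ℝ (LinearMap.ker L) := by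
    have h1 := LinearMap.finrank_range_add_finrank_ker L
    have h2 : Module.finrank ℝ (LinearMap.range L) ≤ r + 1 := by
      rw [← hcod]; exact (LinearMap.range L).finrank_le
    omega
  have : Nontrivial (LinearMap.ker L) := Module.finrank_pos_iff.mp hker
  obtain ⟨x, hx⟩ := exists_ne (0 : LinearMap.ker L)
  have hxker : L (x : W) = 0 := x.2
  refine ⟨((x : W) : ℝ[X]), (x : W).2, ?_, ?_, ?_⟩
  · intro h
    apply hx
    have : (x : W) = 0 := Subtype.ext h
    exact Subtype.ext this
  · have h1 : ((x : W) : ℝ[X]) %ₘ q = 0 := by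
      have := congrArg Prod.fst hxker
      have := congrArg Subtype.val this
      exact this
    exact (modByMonic_eq_zero_iff_dvd hq).1 h1
  · exact congrArg Prod.snd hxker

lemma bound_aux (I : Set ℝ) (hI : I = Set.Icc 0 1 ∨ I = Set.Ici 0) (f₁ g₁ : ℝ[X])
    (hf₁ : ∀ x ∈ I, f₁.eval x ≠ 0) (hdeg : I = Set.Ici 0 → g₁.degree < f₁.degree) :
    ∃ M : ℝ, 0 < M ∧ ∀ x ∈ I, |g₁.eval x| ≤ M * |f₁.eval x| := by
  have habs : ∀ x ∈ I, |g₁.eval x / f₁.eval x| * |f₁.eval x| = |g₁.eval x| := by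
    intro x hx
    rw [← abs_mul, div_mul_cancel₀ _ (hf₁ x hx)]
  have hcont : ∀ s : Set ℝ, s ⊆ I → ContinuousOn (fun x => g₁.eval x / f₁.eval x) s := by
    intro s hs
    exact ContinuousOn.div (Polynomial.continuous g₁).continuousOn
      (Polynomial.continuous f₁).continuousOn (fun x hx => hf₁ x (hs hx))
  rcases hI with hI | hI
  · obtain ⟨C, hC⟩ := (isCompact_Icc (a := (0:ℝ)) (b := 1)).exists_bound_of_continuousOn
      (hcont _ (by rw [hI]))
    refine ⟨max C 1, lt_of_lt_of_le one_pos (le_max_right _ _), fun x hx => ?_⟩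
    rw [← habs x hx]
    apply mul_le_mul_of_nonneg_right _ (abs_nonneg _)
    exact le_trans (by have := hC x (hI ▸ hx); rwa [Real.norm_eq_abs] at this) (le_max_left _ _)
  · have htend := Polynomial.div_tendsto_zero_of_degree_lt g₁ f₁ (hdeg hI)
    have hev : ∀ᶠ x in Filter.atTop, |g₁.eval x / f₁.eval x| ≤ 1 := by
      have := Metric.tendsto_nhds.mp htend 1 one_pos
      filter_upwards [this] with x hx
      rw [Real.dist_eq, sub_zero] at hx
      exact le_of_lt hx
    obtain ⟨T, hT⟩ := Filter.eventually_atTop.mp hev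
    obtain ⟨C, hC⟩ := (isCompact_Icc (a := (0:ℝ)) (b := T)).exists_bound_of_continuousOn
      (hcont _ (by rw [hI]; exact fun x hx => hx.1))
    refine ⟨max C 1, lt_of_lt_of_le one_pos (le_max_right _ _), fun x hx => ?_⟩
    rw [← habs x hx]
    apply mul_le_mul_of_nonneg_right _ (abs_nonneg _)
    rcases le_or_gt x T with hxT | hxT
    · have : x ∈ Set.Icc (0:ℝ) T := ⟨by rw [hI] at hx; exact hx, hxT⟩
      exact le_trans (by have h' := hC x this; rwa [Real.norm_eq_abs] at h') (le_max_left _ _)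
    · exact le_trans (hT x (le_of_lt hxT)) (le_max_right _ _)

/-- A face of a convex cone `C`. -/
def IsFace (C F : Set (Polynomial ℝ)) : Prop :=
  F ⊆ C ∧ (∀ c : ℝ, 0 ≤ c → ∀ x ∈ F, c • x ∈ F) ∧
    (∀ x ∈ F, ∀ y ∈ F, x + y ∈ F) ∧
    ∀ x ∈ C, ∀ y ∈ C, x + y ∈ F → x ∈ F ∧ y ∈ F

theorem stmt_11 (n : ℕ) (m : Fin (n + 1) → ℕ) (hm : StrictAnti m)
    (I : Set ℝ) (hI : I = Set.Icc 0 1 ∨ I = Set.Ici 0) (f : ℝ[X])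
    (hfV : f ∈ Submodule.span ℝ (Set.range fun i => (X : ℝ[X]) ^ m i))
    (hf0 : f ≠ 0)
    (hface : IsFace
      {g : ℝ[X] | g ∈ Submodule.span ℝ (Set.range fun i => (X : ℝ[X]) ^ m i) ∧
        ∀ x ∈ I, 0 ≤ g.eval x}
      {g : ℝ[X] | ∃ c : ℝ, 0 ≤ c ∧ g = c • f})
    (hf00 : 0 < f.eval 0) (hdeg : f.natDegree = m 0) :
    Multiset.card (f.roots.filter (fun x => 0 < x)) = n ∧
      ∀ x : ℝ, 0 < x → f.eval x = 0 → x ∈ I := by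
  classical
  have hminj : Function.Injective m := hm.injective
  have hfF : f ∈ {g : ℝ[X] | ∃ c : ℝ, 0 ≤ c ∧ g = c • f} :=
    ⟨1, zero_le_one, (one_smul ℝ f).symm⟩
  have hfC := hface.1 hfF
  have hfpos : ∀ x ∈ I, 0 ≤ f.eval x := hfC.2
  have hIpos : ∀ x ∈ I, 0 ≤ x := by
    rcases hI with h | h
    · subst h; exact fun x hx => hx.1
    · subst h; exact fun x hx => hx
  set Z : Multiset ℝ := f.roots.filter (fun x => x ∈ I) with hZdef
  have hZroots : Z ≤ f.roots := Multiset.filter_le _ _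
  have hZpos : ∀ z ∈ Z, 0 < z := by
    intro z hz
    obtain ⟨hzr, hzI⟩ := Multiset.mem_filter.1 hz
    rcases lt_or_eq_of_le (hIpos z hzI) with h | h
    · exact h
    · exfalso
      have : f.IsRoot z := (mem_roots hf0).1 hzr
      rw [← h] at this
      exact absurd this.eq_zero (ne_of_gt hf00)
  set q : ℝ[X] := (Z.map fun z => X - C z).prod with hqdef
  have hqmonic : q.Monic :=
    monic_multiset_prod_of_monic _ _ (fun z _ => monic_X_sub_C z)
  have hq0 : q ≠ 0 := hqmonic.ne_zero
  have hqroots : q.roots = Z := roots_multiset_prod_X_sub_C Z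
  have hqdeg : q.natDegree = Multiset.card Z := by
    rw [hqdef, natDegree_multiset_prod_of_monic _ (fun p hp => by
      obtain ⟨z, _, rfl⟩ := Multiset.mem_map.1 hp; exact monic_X_sub_C z)]
    simp [Multiset.map_map, natDegree_X_sub_C]
  have hqdvd : q ∣ f :=
    (Multiset.prod_dvd_prod_of_le (Multiset.map_le_map hZroots)).trans
      (prod_multiset_X_sub_C_dvd f)
  obtain ⟨f₁, hf₁⟩ := hqdvd
  have hf₁0 : f₁ ≠ 0 := fun h => hf0 (by rw [hf₁, h, mul_zero])
  have hf₁I : ∀ x ∈ I, f₁.eval x ≠ 0 := by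
    intro z hzI hz0
    have hroot : f.IsRoot z := by rw [IsRoot, hf₁, eval_mul, hz0, mul_zero]
    have h1 : rootMultiplicity z f = rootMultiplicity z q + rootMultiplicity z f₁ := by
      rw [hf₁]
      exact rootMultiplicity_mul (hf₁ ▸ hf0)
    have h2 : rootMultiplicity z q = rootMultiplicity z f := by
      rw [← count_roots, hqroots, hZdef, Multiset.count_filter, if_pos hzI, count_roots]
    have h3 : 0 < rootMultiplicity z f₁ := (rootMultiplicity_pos hf₁0).2 hz0
    omega
  have hcoefff : f.coeff (m 0) ≠ 0 := by
    rw [← hdeg]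
    exact leadingCoeff_ne_zero.2 hf0
  have hposcard : Multiset.card (f.roots.filter (fun x => 0 < x)) ≤ n := by
    have h1 := descartes f hf0
    have h2 := Finset.card_le_card (mem_span_support m f hfV)
    have h3 := Finset.card_image_le (s := (Finset.univ : Finset (Fin (n+1)))) (f := m)
    simp only [Finset.card_univ, Fintype.card_fin] at h3
    omega
  have hmain : n ≤ Multiset.card Z := by
    by_contra hlt
    push_neg at hlt
    obtain ⟨g, hgW, hg0, hgdvd, hgcoeff⟩ := exists_g m hminj q hqmonic (by omega)
    obtain ⟨g₁, hg₁⟩ := hgdvd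
    have hg₁0 : g₁ ≠ 0 := fun h => hg0 (by rw [hg₁, h, mul_zero])
    have hdegg : g.natDegree < m 0 := by
      have hmem := (mem_span_support m g hgW) (natDegree_mem_support_of_nonzero hg0)
      obtain ⟨i, _, hmi⟩ := Finset.mem_image.1 hmem
      have hi0 : i ≠ 0 := by
        rintro rfl
        rw [hmi] at hgcoeff
        exact leadingCoeff_ne_zero.2 hg0 hgcoeff
      have := hm (Fin.pos_iff_ne_zero.2 hi0 : (0 : Fin (n+1)) < i)
      rw [← hmi]
      exact this
    have hdeg₁ : I = Set.Ici 0 → g₁.degree < f₁.degree := by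
      intro _
      apply degree_lt_degree
      have h1 : f.natDegree = q.natDegree + f₁.natDegree := by
        rw [hf₁, natDegree_mul hq0 hf₁0]
      have h2 : g.natDegree = q.natDegree + g₁.natDegree := by
        rw [hg₁, natDegree_mul hq0 hg₁0]
      omega
    obtain ⟨M, hM, hbound⟩ := bound_aux I hI f₁ g₁ hf₁I hdeg₁
    have hgf : ∀ x ∈ I, |g.eval x| ≤ M * f.eval x := by
      intro x hx
      have h3 : |f.eval x| = f.eval x := abs_of_nonneg (hfpos x hx)
      calc |g.eval x| = |q.eval x| * |g₁.eval x| := by rw [hg₁, eval_mul, abs_mul]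
        _ ≤ |q.eval x| * (M * |f₁.eval x|) :=
          mul_le_mul_of_nonneg_left (hbound x hx) (abs_nonneg _)
        _ = M * |f.eval x| := by rw [hf₁, eval_mul, abs_mul]; ring
        _ = M * f.eval x := by rw [h3]
    set ε := M⁻¹ with hεdef
    have hε0 : 0 < ε := inv_pos.2 hM
    have hεM : ε * M = 1 := inv_mul_cancel₀ (ne_of_gt hM)
    have hCp : (f + ε • g) ∈ {g : ℝ[X] |
        g ∈ Submodule.span ℝ (Set.range fun i => (X : ℝ[X]) ^ m i) ∧
        ∀ x ∈ I, 0 ≤ g.eval x} := by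
      refine ⟨Submodule.add_mem _ hfV (Submodule.smul_mem _ ε hgW), fun x hx => ?_⟩
      rw [eval_add, eval_smul, smul_eq_mul]
      nlinarith [hgf x hx, neg_abs_le (g.eval x), hfpos x hx]
    have hCm : (f - ε • g) ∈ {g : ℝ[X] |
        g ∈ Submodule.span ℝ (Set.range fun i => (X : ℝ[X]) ^ m i) ∧
        ∀ x ∈ I, 0 ≤ g.eval x} := by
      refine ⟨Submodule.sub_mem _ hfV (Submodule.smul_mem _ ε hgW), fun x hx => ?_⟩
      rw [eval_sub, eval_smul, smul_eq_mul]
      nlinarith [hgf x hx, le_abs_self (g.eval x), hfpos x hx]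
    have hsum : (f + ε • g) + (f - ε • g) = (2:ℝ) • f := by module
    have h2F : ((2:ℝ) • f) ∈ {g : ℝ[X] | ∃ c : ℝ, 0 ≤ c ∧ g = c • f} :=
      ⟨2, by norm_num, rfl⟩
    have hpF := (hface.2.2.2 _ hCp _ hCm (by rw [hsum]; exact h2F)).1
    obtain ⟨c, _, hc⟩ := hpF
    have hcoe := congrArg (fun p => Polynomial.coeff p (m 0)) hc
    simp only [coeff_add, coeff_smul, hgcoeff, smul_eq_mul, mul_zero, add_zero] at hcoe
    have hc1 : c = 1 := by
      have h' : (c - 1) * f.coeff (m 0) = 0 := by linear_combination (-1 : ℝ) * hcoe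
      rcases mul_eq_zero.1 h' with h | h
      · linarith
      · exact absurd h hcoefff
    rw [hc1, one_smul] at hc
    have hzero : ε • g = 0 := by
      have := add_eq_left.1 hc
      exact this
    rcases smul_eq_zero.1 hzero with h | h
    · exact absurd h (ne_of_gt hε0)
    · exact hg0 h
  have hZle : Z ≤ f.roots.filter (fun x => 0 < x) := by
    rw [Multiset.le_filter]
    exact ⟨hZroots, hZpos⟩
  have hcards : Multiset.card Z ≤ Multiset.card (f.roots.filter fun x => 0 < x) :=
    Multiset.card_le_card hZle
  have hcardeq : Multiset.card (f.roots.filter fun x => 0 < x) = n :=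
    le_antisymm hposcard (le_trans hmain hcards)
  refine ⟨hcardeq, ?_⟩
  have hZeq : f.roots.filter (fun x => 0 < x) = Z :=
    (Multiset.eq_of_le_of_card_le hZle (by omega)).symm
  intro x hx hfx
  have hmemf : x ∈ f.roots.filter (fun x => 0 < x) :=
    Multiset.mem_filter.2 ⟨(mem_roots hf0).2 hfx, hx⟩
  rw [hZeq] at hmemf
  exact (Multiset.mem_filter.1 hmemf).2
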